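/- Let d ≥ 1, v > 0, and let X₁, …, X_N ∈ ℝ^d and X'₁, …, X'_N ∈ ℝ^d. Let K be the real N × N Gaussian cross Gram matrix with entries K_{ij} = exp(−‖X_i − X'_j‖²/(2v)). Then the sum of the singular values of K (its nuclear norm) is at most N. -/

import Mathlib

open Matrix BigOperators Finset

lemma pow_kernel_nonneg {ι : Type*} [Fintype ι] {d : ℕ}
    (Y : ι → EuclideanSpace ℝ (Fin d)) (a : ι → ℝ) (k : ℕ) :
    0 ≤ ∑ p, ∑ q, a p * a q * (inner ℝ (Y p) (Y q) : ℝ) ^ k := by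
  have hinner : ∀ p q, (inner ℝ (Y p) (Y q) : ℝ) = ∑ t, Y p t * Y q t := by
    intro p q
    simp [PiLp.inner_apply, RCLike.inner_apply, conj_trivial, mul_comm]
  have hpow : ∀ p q, (inner ℝ (Y p) (Y q) : ℝ) ^ k
      = ∑ g ∈ Fintype.piFinset (fun _ : Fin k => (Finset.univ : Finset (Fin d))),
          (∏ l, Y p (g l)) * (∏ l, Y q (g l)) := by
    intro p q
    rw [hinner]
    have : (∑ t, Y p t * Y q t) ^ k = ∏ _l : Fin k, (∑ t, Y p t * Y q t) := by
      rw [Finset.prod_const, Finset.card_univ, Fintype.card_fin]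
    rw [this, Finset.prod_univ_sum]
    exact Finset.sum_congr rfl fun g _ => by rw [← Finset.prod_mul_distrib]
  calc (0:ℝ) ≤ ∑ g ∈ Fintype.piFinset (fun _ : Fin k => (Finset.univ : Finset (Fin d))),
        (∑ p, a p * ∏ l, Y p (g l)) ^ 2 :=
      Finset.sum_nonneg fun g _ => sq_nonneg _
    _ = ∑ p, ∑ q, a p * a q * (inner ℝ (Y p) (Y q) : ℝ) ^ k := by
      simp_rw [sq, Finset.sum_mul_sum, hpow, Finset.mul_sum]
      rw [Finset.sum_comm]
      refine Finset.sum_congr rfl fun p _ => Finset.sum_comm.trans ?_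
      refine Finset.sum_congr rfl fun q _ => Finset.sum_congr rfl fun g _ => by ring

lemma gaussian_quadform_nonneg {ι : Type*} [Fintype ι] {d : ℕ} {v : ℝ} (hv : 0 < v)
    (Y : ι → EuclideanSpace ℝ (Fin d)) (c : ι → ℝ) :
    0 ≤ ∑ p, ∑ q, c p * c q * Real.exp (-‖Y p - Y q‖ ^ 2 / (2 * v)) := by
  set a : ι → ℝ := fun p => c p * Real.exp (-‖Y p‖ ^ 2 / (2 * v)) with ha
  set f : ι → ι → ℕ → ℝ := fun p q k =>
    a p * a q * ((inner ℝ (Y p) (Y q) : ℝ) ^ k * (1 / (v ^ k * (k.factorial : ℝ)))) with hf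
  have hsummable : ∀ p q : ι, Summable (f p q) := by
    intro p q
    apply Summable.mul_left
    have := Real.summable_pow_div_factorial ((inner ℝ (Y p) (Y q) : ℝ) / v)
    refine this.congr fun k => ?_
    rw [div_pow]; field_simp
  have hsplit : ∀ p q : ι, c p * c q * Real.exp (-‖Y p - Y q‖ ^ 2 / (2 * v))
      = ∑' k, f p q k := by
    intro p q
    have h1 : -‖Y p - Y q‖ ^ 2 / (2 * v)
        = -‖Y p‖ ^ 2 / (2 * v) + (inner ℝ (Y p) (Y q) : ℝ) / v + -‖Y q‖ ^ 2 / (2 * v) := by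
      rw [norm_sub_sq_real]; field_simp; ring
    have h2 : Real.exp ((inner ℝ (Y p) (Y q) : ℝ) / v)
        = ∑' k : ℕ, ((inner ℝ (Y p) (Y q) : ℝ))^k * (1 / (v ^ k * (k.factorial : ℝ))) := by
      rw [Real.exp_eq_exp_ℝ, NormedSpace.exp_eq_tsum_div]
      refine tsum_congr fun k => ?_
      rw [div_pow]; field_simp
    have h3 : c p * c q * Real.exp (-‖Y p - Y q‖ ^ 2 / (2 * v))
        = a p * a q * Real.exp ((inner ℝ (Y p) (Y q) : ℝ) / v) := by
      rw [h1, Real.exp_add, Real.exp_add, ha]; ring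
    rw [h3, h2, ← tsum_mul_left]
  simp_rw [hsplit]
  have hsum1 : ∀ p : ι, Summable (fun k => ∑ q, f p q k) :=
    fun p => summable_sum fun q _ => hsummable p q
  have e1 : ∀ p : ι, ∑ q, ∑' k, f p q k = ∑' k, ∑ q, f p q k :=
    fun p => (Summable.tsum_finsetSum fun q _ => hsummable p q).symm
  simp_rw [e1]
  rw [← Summable.tsum_finsetSum fun p _ => hsum1 p]
  refine tsum_nonneg fun k => ?_
  have : ∑ p, ∑ q, f p q k
      = (∑ p, ∑ q, a p * a q * (inner ℝ (Y p) (Y q) : ℝ) ^ k) * (1 / (v ^ k * (k.factorial : ℝ))) := by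
    rw [Finset.sum_mul]
    exact Finset.sum_congr rfl fun p _ => by rw [Finset.sum_mul]; exact Finset.sum_congr rfl fun q _ => by rw [hf]; ring
  rw [this]
  apply mul_nonneg (pow_kernel_nonneg Y a k)
  positivity

lemma gaussian_posSemidef {ι : Type*} [Fintype ι] [DecidableEq ι] {d : ℕ} {v : ℝ} (hv : 0 < v)
    (Y : ι → EuclideanSpace ℝ (Fin d)) :
    PosSemidef (Matrix.of fun p q : ι => Real.exp (-‖Y p - Y q‖ ^ 2 / (2 * v))) := by
  rw [Matrix.posSemidef_iff_dotProduct_mulVec]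
  constructor
  · ext p q
    simp only [conjTranspose_apply, of_apply, star_trivial]
    rw [norm_sub_rev]
  · intro x
    have : dotProduct (star x) ((Matrix.of fun p q : ι =>
        Real.exp (-‖Y p - Y q‖ ^ 2 / (2 * v))) *ᵥ x)
        = ∑ p, ∑ q, x p * x q * Real.exp (-‖Y p - Y q‖ ^ 2 / (2 * v)) := by
      simp only [dotProduct, mulVec, star_trivial, of_apply, Finset.mul_sum]
      exact Finset.sum_congr rfl fun p _ => Finset.sum_congr rfl fun q _ => by
        ring
    rw [this]
    exact gaussian_quadform_nonneg hv Y x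

-- small helpers
lemma dot_self_nonneg {κ : Type*} [Fintype κ] (w : κ → ℝ) : 0 ≤ w ⬝ᵥ w :=
  Finset.sum_nonneg fun t _ => mul_self_nonneg _

lemma dot_le_half {κ : Type*} [Fintype κ] (p q : κ → ℝ) :
    p ⬝ᵥ q ≤ (p ⬝ᵥ p) / 2 + (q ⬝ᵥ q) / 2 := by
  have h := dot_self_nonneg (p - q)
  have e : (p - q) ⬝ᵥ (p - q) = p ⬝ᵥ p - 2 * (p ⬝ᵥ q) + q ⬝ᵥ q := by
    rw [sub_dotProduct, dotProduct_sub, dotProduct_sub, dotProduct_comm q p]; ring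
  rw [e] at h; linarith

lemma dot_factor {ι κ : Type*} [Fintype ι] [Fintype κ]
    (A B : Matrix ι κ ℝ) (x y : κ → ℝ) :
    (A *ᵥ x) ⬝ᵥ (B *ᵥ y) = x ⬝ᵥ ((Aᵀ * B) *ᵥ y) := by
  rw [dotProduct_comm, dotProduct_mulVec, ← mulVec_transpose, ← mulVec_mulVec,
    dotProduct_comm]

lemma quad_expand {κ : Type*} [Fintype κ] (M : Matrix κ κ ℝ) (x y : κ → ℝ) :
    x ⬝ᵥ (M *ᵥ y) = ∑ s, ∑ t, M s t * (x s * y t) := by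
  simp only [dotProduct, mulVec, Finset.mul_sum]
  exact Finset.sum_congr rfl fun s _ => Finset.sum_congr rfl fun t _ => by
    ring

lemma sum_quadform_orth {κ : Type*} [Fintype κ] [DecidableEq κ]
    (M : Matrix κ κ ℝ) (v : κ → κ → ℝ)
    (hrow : ∀ s t, ∑ i, v i s * v i t = if s = t then 1 else 0) :
    ∑ i, v i ⬝ᵥ (M *ᵥ v i) = ∑ s, M s s := by
  calc ∑ i, v i ⬝ᵥ (M *ᵥ v i) = ∑ i, ∑ s, ∑ t, M s t * (v i s * v i t) := by
        exact Finset.sum_congr rfl fun i _ => quad_expand M (v i) (v i)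
    _ = ∑ s, ∑ i, ∑ t, M s t * (v i s * v i t) := Finset.sum_comm
    _ = ∑ s, ∑ t, ∑ i, M s t * (v i s * v i t) :=
        Finset.sum_congr rfl fun s _ => Finset.sum_comm
    _ = ∑ s, ∑ t, M s t * (if s = t then 1 else 0) := by
        refine Finset.sum_congr rfl fun s _ => Finset.sum_congr rfl fun t _ => ?_
        rw [← Finset.mul_sum, hrow]
    _ = ∑ s, M s s := by
        refine Finset.sum_congr rfl fun s _ => ?_
        simp [Finset.sum_ite_eq]

lemma sum_quadform_le {α ι κ : Type*} [Fintype α] [Fintype ι] [Fintype κ] [DecidableEq α]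
    (Φ : Matrix ι κ ℝ) (u : α → κ → ℝ)
    (horth : ∀ i j, i ≠ j → u i ⬝ᵥ u j = 0)
    (hself : ∀ i, u i ⬝ᵥ u i = 1 ∨ u i = 0) :
    ∑ i, (Φ *ᵥ u i) ⬝ᵥ (Φ *ᵥ u i) ≤ ∑ r, ∑ j, Φ r j * Φ r j := by
  classical
  set Qm : Matrix κ κ ℝ := Matrix.of fun s t => ∑ i, u i s * u i t with hQm
  have hQv : ∀ r : κ → ℝ, Qm *ᵥ r = fun s => ∑ i, (u i ⬝ᵥ r) * u i s := by
    intro r; funext s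
    simp only [mulVec, dotProduct, hQm, Matrix.of_apply, Finset.sum_mul, Finset.mul_sum]
    rw [Finset.sum_comm]
    exact Finset.sum_congr rfl fun i _ => Finset.sum_congr rfl fun t _ => by ring
  have hrQ : ∀ r : κ → ℝ, r ⬝ᵥ (Qm *ᵥ r) = ∑ i, (u i ⬝ᵥ r) ^ 2 := by
    intro r
    rw [hQv]
    simp only [dotProduct, Finset.mul_sum]
    rw [Finset.sum_comm]
    refine Finset.sum_congr rfl fun i _ => ?_
    simp only [sq, dotProduct, Finset.sum_mul, Finset.mul_sum]
    exact Finset.sum_congr rfl fun s _ => Finset.sum_congr rfl fun t _ => by ring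
  have hQQ : ∀ r : κ → ℝ, (Qm *ᵥ r) ⬝ᵥ (Qm *ᵥ r) = ∑ i, (u i ⬝ᵥ r) ^ 2 := by
    intro r
    rw [hQv]
    have e1 : (fun s => ∑ i, (u i ⬝ᵥ r) * u i s) ⬝ᵥ (fun s => ∑ i, (u i ⬝ᵥ r) * u i s)
        = ∑ i, ∑ j, ((u i ⬝ᵥ r) * (u j ⬝ᵥ r)) * (u i ⬝ᵥ u j) := by
      calc (fun s => ∑ i, (u i ⬝ᵥ r) * u i s) ⬝ᵥ (fun s => ∑ i, (u i ⬝ᵥ r) * u i s)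
          = ∑ s, ∑ i, ∑ j, ((u i ⬝ᵥ r) * u i s) * ((u j ⬝ᵥ r) * u j s) := by
            refine Finset.sum_congr rfl fun s _ => ?_
            rw [Finset.sum_mul_sum]
        _ = ∑ i, ∑ s, ∑ j, ((u i ⬝ᵥ r) * u i s) * ((u j ⬝ᵥ r) * u j s) := Finset.sum_comm
        _ = ∑ i, ∑ j, ∑ s, ((u i ⬝ᵥ r) * u i s) * ((u j ⬝ᵥ r) * u j s) :=
            Finset.sum_congr rfl fun i _ => Finset.sum_comm
        _ = ∑ i, ∑ j, ((u i ⬝ᵥ r) * (u j ⬝ᵥ r)) * (u i ⬝ᵥ u j) := by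
            refine Finset.sum_congr rfl fun i _ => Finset.sum_congr rfl fun j _ => ?_
            rw [show u i ⬝ᵥ u j = ∑ s, u i s * u j s from rfl, Finset.mul_sum]
            exact Finset.sum_congr rfl fun s _ => by ring
    rw [e1]
    refine Finset.sum_congr rfl fun i _ => ?_
    rw [Finset.sum_eq_single i]
    · rcases hself i with h | h
      · rw [h]; ring
      · simp [h]
    · intro j _ hji
      rw [horth i j (Ne.symm hji)]; ring
    · intro h; exact absurd (Finset.mem_univ i) h
  have hproj : ∀ r : κ → ℝ, r ⬝ᵥ (Qm *ᵥ r) ≤ r ⬝ᵥ r := by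
    intro r
    have h0 := dot_self_nonneg (r - Qm *ᵥ r)
    have e : (r - Qm *ᵥ r) ⬝ᵥ (r - Qm *ᵥ r)
        = r ⬝ᵥ r - 2 * (r ⬝ᵥ (Qm *ᵥ r)) + (Qm *ᵥ r) ⬝ᵥ (Qm *ᵥ r) := by
      rw [sub_dotProduct, dotProduct_sub, dotProduct_sub, dotProduct_comm (Qm *ᵥ r) r]
      ring
    rw [e, hQQ, ← hrQ] at h0
    linarith
  calc ∑ i, (Φ *ᵥ u i) ⬝ᵥ (Φ *ᵥ u i)
      = ∑ i, ∑ s, (u i ⬝ᵥ (fun j => Φ s j)) ^ 2 := by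
        refine Finset.sum_congr rfl fun i _ => ?_
        simp only [dotProduct, mulVec, sq]
        have hc : ∀ s : ι, ∑ t, Φ s t * u i t = ∑ t, u i t * Φ s t :=
          fun s => Finset.sum_congr rfl fun t _ => mul_comm _ _
        exact Finset.sum_congr rfl fun s _ => by rw [hc s]
    _ = ∑ s, ∑ i, (u i ⬝ᵥ (fun j => Φ s j)) ^ 2 := Finset.sum_comm
    _ = ∑ s, (fun j => Φ s j) ⬝ᵥ (Qm *ᵥ (fun j => Φ s j)) := by
        exact Finset.sum_congr rfl fun s _ => (hrQ _).symm
    _ ≤ ∑ s, (fun j => Φ s j) ⬝ᵥ (fun j => Φ s j) :=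
        Finset.sum_le_sum fun s _ => hproj _
    _ = ∑ r, ∑ j, Φ r j * Φ r j := rfl

open scoped MatrixOrder in
lemma Matrix.posSemidef_iff_eq_transpose_mul_self {n : Type*} [Fintype n] [DecidableEq n]
    {A : Matrix n n ℝ} : A.PosSemidef ↔ ∃ B : Matrix n n ℝ, A = Bᴴ * B := by
  constructor
  · intro hA
    refine ⟨CFC.sqrt A, ?_⟩
    have h0 : 0 ≤ A := hA.nonneg
    rw [← Matrix.star_eq_conjTranspose, (CFC.sqrt_nonneg A).isSelfAdjoint.star_eq,
      CFC.sqrt_mul_sqrt_self A h0]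
  · rintro ⟨B, rfl⟩
    exact Matrix.posSemidef_conjTranspose_mul_self B

/-- The nuclear norm of a real matrix `M`: the sum of its singular values, where the singular
values are the square roots of the eigenvalues of the symmetric PSD matrix `Mᵀ M`. -/
noncomputable def nuclearNorm {m n : ℕ} (M : Matrix (Fin m) (Fin n) ℝ) : ℝ :=
  ∑ i, Real.sqrt ((show (Mᵀ * M).IsHermitian by
    simpa using Matrix.isHermitian_conjTranspose_mul_self M).eigenvalues i)

lemma nuclearNorm_factor_le {N : ℕ} {ι : Type*} [Fintype ι]
    (K : Matrix (Fin N) (Fin N) ℝ) (Φ Ψ : Matrix ι (Fin N) ℝ)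
    (hK : K = Φᵀ * Ψ)
    (hΦ : ∀ j, ∑ t, Φ t j * Φ t j = 1) (hΨ : ∀ j, ∑ t, Ψ t j * Ψ t j = 1) :
    nuclearNorm K ≤ N := by
  classical
  have hH : (Kᵀ * K).IsHermitian := by simpa using Matrix.isHermitian_conjTranspose_mul_self K
  set lam : Fin N → ℝ := hH.eigenvalues with hlam
  set b := hH.eigenvectorBasis with hb
  set v : Fin N → Fin N → ℝ := fun i => ⇑(b i) with hv
  have hPSD : (Kᵀ * K).PosSemidef := by
    have := Matrix.posSemidef_conjTranspose_mul_self K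
    simpa using this
  have hlam0 : ∀ i, 0 ≤ lam i := fun i => hPSD.eigenvalues_nonneg i
  have hvdot : ∀ i j, v i ⬝ᵥ v j = if i = j then 1 else 0 := by
    intro i j
    have horm := orthonormal_iff_ite.mp b.orthonormal i j
    rw [← horm]
    simp [PiLp.inner_apply, RCLike.inner_apply, conj_trivial, dotProduct, hv, mul_comm]
  have hmul : ∀ i, (Kᵀ * K) *ᵥ v i = lam i • v i := fun i => hH.mulVec_eigenvectorBasis i
  have hKv : ∀ i j, (K *ᵥ v i) ⬝ᵥ (K *ᵥ v j) = lam j * (if i = j then 1 else 0) := by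
    intro i j
    rw [dot_factor, hmul, dotProduct_smul, smul_eq_mul, hvdot]
  set u : Fin N → Fin N → ℝ := fun i => (Real.sqrt (lam i))⁻¹ • (K *ᵥ v i) with hu
  have huu : ∀ i j, u i ⬝ᵥ u j
      = (Real.sqrt (lam i))⁻¹ * ((Real.sqrt (lam j))⁻¹ * (lam j * (if i = j then 1 else 0))) := by
    intro i j
    rw [hu]
    simp only [smul_dotProduct, dotProduct_smul, smul_eq_mul, hKv]
    ring
  have huzero : ∀ i, lam i = 0 → u i = 0 := by
    intro i h
    rw [hu]; simp [h]
  have horth' : ∀ i j, i ≠ j → u i ⬝ᵥ u j = 0 := by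
    intro i j hij; rw [huu, if_neg hij]; ring
  have hself' : ∀ i, u i ⬝ᵥ u i = 1 ∨ u i = 0 := by
    intro i
    rcases eq_or_lt_of_le (hlam0 i) with h | h
    · exact Or.inr (huzero i h.symm)
    · left
      rw [huu, if_pos rfl, mul_one]
      have hs : Real.sqrt (lam i) ≠ 0 := ne_of_gt (Real.sqrt_pos.mpr h)
      have hss : Real.sqrt (lam i) * Real.sqrt (lam i) = lam i := Real.mul_self_sqrt (hlam0 i)
      field_simp
      rw [sq, hss]
  have hsig : ∀ i, Real.sqrt (lam i) = (Φ *ᵥ u i) ⬝ᵥ (Ψ *ᵥ v i) := by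
    intro i
    rw [dot_factor, ← hK, hu]
    simp only [smul_dotProduct, smul_eq_mul]
    rw [show (K *ᵥ v i) ⬝ᵥ (K *ᵥ v i) = lam i * (if i = i then 1 else 0) from hKv i i,
      if_pos rfl, mul_one]
    rcases eq_or_lt_of_le (hlam0 i) with h | h
    · rw [← h]; simp
    · have hs : Real.sqrt (lam i) ≠ 0 := ne_of_gt (Real.sqrt_pos.mpr h)
      have hss : Real.sqrt (lam i) * Real.sqrt (lam i) = lam i := Real.mul_self_sqrt (hlam0 i)
      field_simp
      rw [sq, hss]
  -- row orthonormality of eigenvectors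
  have hrow : ∀ s t, ∑ i, v i s * v i t = if s = t then 1 else 0 := by
    intro s t
    have hU := (Unitary.mem_iff.mp hH.eigenvectorUnitary.2).2
    have h1 := congrFun (congrFun (congrArg (fun M : Matrix (Fin N) (Fin N) ℝ => M) hU) s) t
    simpa [Matrix.mul_apply, Matrix.star_apply, Matrix.one_apply, hv, hb,
      Matrix.IsHermitian.eigenvectorUnitary_apply] using h1
  -- sums
  have hsumQ : ∑ i, (Ψ *ᵥ v i) ⬝ᵥ (Ψ *ᵥ v i) = (N : ℝ) := by
    have e1 : ∀ i, (Ψ *ᵥ v i) ⬝ᵥ (Ψ *ᵥ v i) = v i ⬝ᵥ ((Ψᵀ * Ψ) *ᵥ v i) :=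
      fun i => dot_factor Ψ Ψ (v i) (v i)
    simp_rw [e1]
    rw [sum_quadform_orth (Ψᵀ * Ψ) v hrow]
    have : ∀ s, (Ψᵀ * Ψ) s s = 1 := by
      intro s
      rw [Matrix.mul_apply]
      simp only [Matrix.transpose_apply]
      exact hΨ s
    simp [this]
  have hsumP : ∑ i, (Φ *ᵥ u i) ⬝ᵥ (Φ *ᵥ u i) ≤ (N : ℝ) := by
    refine le_trans (sum_quadform_le Φ u horth' hself') ?_
    rw [Finset.sum_comm]
    have : ∀ j : Fin N, ∑ r, Φ r j * Φ r j = 1 := hΦ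
    simp [this]
  calc nuclearNorm K = ∑ i, Real.sqrt (lam i) := rfl
    _ ≤ ∑ i, (((Φ *ᵥ u i) ⬝ᵥ (Φ *ᵥ u i)) / 2 + ((Ψ *ᵥ v i) ⬝ᵥ (Ψ *ᵥ v i)) / 2) := by
        refine Finset.sum_le_sum fun i _ => ?_
        rw [hsig i]
        exact dot_le_half _ _
    _ = (∑ i, (Φ *ᵥ u i) ⬝ᵥ (Φ *ᵥ u i)) / 2 + (∑ i, (Ψ *ᵥ v i) ⬝ᵥ (Ψ *ᵥ v i)) / 2 := by
        rw [Finset.sum_add_distrib, Finset.sum_div, Finset.sum_div]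
    _ ≤ (N : ℝ) / 2 + (N : ℝ) / 2 := by
        rw [hsumQ]
        exact add_le_add (by linarith [hsumP]) le_rfl
    _ = N := by ring

/-- The nuclear norm (sum of singular values) of the Gaussian cross Gram matrix
`K i j = exp(-‖Xᵢ - X'ⱼ‖²/(2v))` between two batches of `N` points in `ℝ^d` is at most `N`. -/
theorem nuclearNorm_gaussian_cross_gram_le {d N : ℕ} (hd : 1 ≤ d) (v : ℝ) (hv : 0 < v)
    (X X' : Fin N → EuclideanSpace ℝ (Fin d)) :
    nuclearNorm
        (Matrix.of fun i j : Fin N => Real.exp (-‖X i - X' j‖ ^ 2 / (2 * v))) ≤ N := by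
  classical
  set Y : Fin N ⊕ Fin N → EuclideanSpace ℝ (Fin d) := Sum.elim X X' with hY
  have hG := gaussian_posSemidef hv Y
  obtain ⟨B, hB⟩ := Matrix.posSemidef_iff_eq_transpose_mul_self.mp hG
  set Φ : Matrix (Fin N ⊕ Fin N) (Fin N) ℝ := Matrix.of fun t i => B t (Sum.inl i) with hPhi
  set Ψ : Matrix (Fin N ⊕ Fin N) (Fin N) ℝ := Matrix.of fun t j => B t (Sum.inr j) with hPsi
  have hentry : ∀ p q, (Bᴴ * B) p q
      = Real.exp (-‖Y p - Y q‖ ^ 2 / (2 * v)) := by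
    intro p q
    rw [← hB]; simp
  have hfact : (Matrix.of fun i j : Fin N => Real.exp (-‖X i - X' j‖ ^ 2 / (2 * v)))
      = Φᵀ * Ψ := by
    ext i j
    have h := hentry (Sum.inl i) (Sum.inr j)
    simp only [Matrix.mul_apply, Matrix.conjTranspose_apply, star_trivial, hY,
      Sum.elim_inl, Sum.elim_inr] at h
    simp only [Matrix.of_apply, Matrix.mul_apply, Matrix.transpose_apply, hPhi, hPsi,
      Matrix.of_apply]
    rw [← h]
  have hone : ∀ x : EuclideanSpace ℝ (Fin d), Real.exp (-‖x - x‖ ^ 2 / (2 * v)) = 1 := by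
    intro x
    simp
  have hΦ : ∀ j, ∑ t, Φ t j * Φ t j = 1 := by
    intro j
    have h := hentry (Sum.inl j) (Sum.inl j)
    simp only [Matrix.mul_apply, Matrix.conjTranspose_apply, star_trivial, hY,
      Sum.elim_inl] at h
    simp only [hPhi, Matrix.of_apply]
    rw [h, hone]
  have hΨ : ∀ j, ∑ t, Ψ t j * Ψ t j = 1 := by
    intro j
    have h := hentry (Sum.inr j) (Sum.inr j)
    simp only [Matrix.mul_apply, Matrix.conjTranspose_apply, star_trivial, hY,
      Sum.elim_inr] at h
    simp only [hPsi, Matrix.of_apply]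
    rw [h, hone]
  exact nuclearNorm_factor_le _ Φ Ψ hfact hΦ hΨ
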